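/- Let n ≥ 2 and let ω ∈ ℝⁿ be resonant, i.e. there exists a nonzero k ∈ ℤⁿ with ⟨k,ω⟩ ∈ ℤ. Then there exists a constant C > 0 such that the inequality ‖Tω‖_ℤ ≤ C·T^{-1/(n−1)} holds for infinitely many positive integers T. -/

import Mathlib

open Finset

/-- Sup norm on `ℝⁿ`. -/
noncomputable def supNorm {n : ℕ} (x : Fin n → ℝ) : ℝ := ⨆ i, |x i|

/-- Sup-norm distance from `x ∈ ℝⁿ` to the lattice `ℤⁿ`. -/
noncomputable def distZ {n : ℕ} (x : Fin n → ℝ) : ℝ :=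
  sInf {r : ℝ | ∃ k : Fin n → ℤ, r = supNorm (fun i => x i - k i)}

/-- Distance from a real number to `ℤ`. -/
noncomputable def distZ1 (t : ℝ) : ℝ := sInf {r : ℝ | ∃ m : ℤ, r = |t - m|}

/-- `ω ∈ ℚⁿ`. -/
def IsRationalVec {n : ℕ} (ω : Fin n → ℝ) : Prop := ∀ i, ∃ q : ℚ, (q : ℝ) = ω i

/-- `ω` is resonant: some nonzero integer vector `k` has `⟨k, ω⟩ ∈ ℤ`. -/
def Resonant {n : ℕ} (ω : Fin n → ℝ) : Prop :=
  ∃ k : Fin n → ℤ, k ≠ 0 ∧ ∃ m : ℤ, ∑ i, (k i : ℝ) * ω i = (m : ℝ)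

/-- The sequence of periods of `ω`. -/
noncomputable def periods {n : ℕ} (ω : Fin n → ℝ) : ℕ → ℕ
  | 0 => 1
  | i + 1 => sInf {T : ℕ | 1 ≤ T ∧
      distZ (fun j => (T : ℝ) * ω j) < distZ (fun j => (periods ω i : ℝ) * ω j)}

/-- The resonance module of `ω`, as a subgroup of `ℤⁿ`. -/
def resModule {n : ℕ} (ω : Fin n → ℝ) : AddSubgroup (Fin n → ℤ) where
  carrier := {k | ∃ m : ℤ, ∑ i, (k i : ℝ) * ω i = (m : ℝ)}
  zero_mem' := ⟨0, by simp⟩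
  add_mem' := by
    rintro a b ⟨ma, ha⟩ ⟨mb, hb⟩
    refine ⟨ma + mb, ?_⟩
    push_cast
    simp only [Pi.add_apply, Int.cast_add, add_mul, Finset.sum_add_distrib, ha, hb]
  neg_mem' := by
    rintro a ⟨m, hm⟩
    refine ⟨-m, ?_⟩
    push_cast
    simp [neg_mul, Finset.sum_neg_distrib, hm]
lemma supNorm_nonneg {n : ℕ} (x : Fin n → ℝ) : 0 ≤ supNorm x :=
  Real.iSup_nonneg (fun _ => abs_nonneg _)

lemma distZ_le {n : ℕ} (x : Fin n → ℝ) (k : Fin n → ℤ) :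
    distZ x ≤ supNorm (fun i => x i - k i) := by
  apply csInf_le
  · exact ⟨0, by rintro r ⟨k', rfl⟩; exact supNorm_nonneg _⟩
  · exact ⟨k, rfl⟩

lemma supNorm_le {n : ℕ} [Nonempty (Fin n)] {x : Fin n → ℝ} {c : ℝ}
    (h : ∀ i, |x i| ≤ c) : supNorm x ≤ c := ciSup_le h

lemma distZ_le_zero {n : ℕ} [Nonempty (Fin n)] {x : Fin n → ℝ}
    (h : ∀ j, ∃ p : ℤ, x j = p) : distZ x ≤ 0 := by
  choose p hp using h
  refine (distZ_le x p).trans (supNorm_le fun i => ?_)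
  rw [hp i]; simp

lemma nearest_int_bound (x : ℝ) (p : ℤ) :
    min (Int.fract x) (1 - Int.fract x) ≤ |x - p| := by
  rcases le_or_gt (p : ℝ) (⌊x⌋ : ℝ) with h | h
  · have h1 : Int.fract x ≤ x - p := by
      have hx := Int.floor_le x
      unfold Int.fract at *; linarith
    calc min _ _ ≤ Int.fract x := min_le_left _ _
      _ ≤ |x - p| := h1.trans (le_abs_self _)
  · have hp : (⌊x⌋ : ℝ) + 1 ≤ p := by exact_mod_cast Int.lt_iff_add_one_le.mp (by exact_mod_cast h)
    have h1 : 1 - Int.fract x ≤ p - x := by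
      unfold Int.fract; linarith
    calc min _ _ ≤ 1 - Int.fract x := min_le_right _ _
      _ ≤ |x - p| := h1.trans ((neg_sub x (p:ℝ)) ▸ (neg_le_abs _))

lemma dirichlet {ι : Type*} [Fintype ι] [DecidableEq ι] (α : ι → ℝ) (Q : ℕ) (hQ : 1 ≤ Q) :
    ∃ q : ℕ, 1 ≤ q ∧ q ≤ Q ^ (Fintype.card ι) ∧ ∀ j, ∃ p : ℤ, |q * α j - p| < 1 / Q := by
  set d := Fintype.card ι
  have hQ0 : (0:ℝ) < Q := by positivity
  have hf : ∀ (t : ℕ) (j : ι), ⌊(Q:ℝ) * Int.fract (t * α j)⌋.toNat < Q := by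
    intro t j
    have h1 : (Q:ℝ) * Int.fract (t * α j) < Q := by
      have := Int.fract_lt_one ((t:ℝ) * α j)
      nlinarith
    have h2 : ⌊(Q:ℝ) * Int.fract (t * α j)⌋ < (Q:ℤ) := by
      rw [Int.floor_lt]; exact_mod_cast h1
    omega
  let f : Fin (Q ^ d + 1) → ι → Fin Q := fun t j => ⟨⌊(Q:ℝ) * Int.fract (t * α j)⌋.toNat, hf t j⟩
  have main : ∀ a b : Fin (Q^d+1), (a:ℕ) < (b:ℕ) → f a = f b →
      ∃ q : ℕ, 1 ≤ q ∧ q ≤ Q ^ d ∧ ∀ j, ∃ p : ℤ, |q * α j - p| < 1 / Q := by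
    intro a b hab hfab
    refine ⟨(b:ℕ) - (a:ℕ), by omega, by have := b.isLt; omega, ?_⟩
    intro j
    refine ⟨⌊(b:ℕ) * α j⌋ - ⌊(a:ℕ) * α j⌋, ?_⟩
    have hcast : (((b:ℕ) - (a:ℕ) : ℕ) : ℝ) = (b:ℕ) - (a:ℕ) := by
      push_cast [Nat.cast_sub hab.le]; ring
    have hkey : ((b:ℕ) - (a:ℕ) : ℕ) * α j - ((⌊(b:ℕ) * α j⌋ - ⌊(a:ℕ) * α j⌋ : ℤ) : ℝ)
        = Int.fract ((b:ℕ) * α j) - Int.fract ((a:ℕ) * α j) := by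
      rw [hcast]; unfold Int.fract; push_cast; ring
    rw [hkey]
    have hfl : ⌊(Q:ℝ) * Int.fract ((a:ℕ) * α j)⌋ = ⌊(Q:ℝ) * Int.fract ((b:ℕ) * α j)⌋ := by
      have := congrFun hfab j
      simp only [f, Fin.mk.injEq] at this
      have na : 0 ≤ ⌊(Q:ℝ) * Int.fract ((a:ℕ) * α j)⌋ :=
        Int.floor_nonneg.mpr (mul_nonneg hQ0.le (Int.fract_nonneg _))
      have nb : 0 ≤ ⌊(Q:ℝ) * Int.fract ((b:ℕ) * α j)⌋ :=
        Int.floor_nonneg.mpr (mul_nonneg hQ0.le (Int.fract_nonneg _))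
      omega
    have := Int.abs_sub_lt_one_of_floor_eq_floor hfl.symm
    rw [← mul_sub, abs_mul, abs_of_pos hQ0] at this
    rw [lt_div_iff₀ hQ0, mul_comm]
    exact this
  obtain ⟨t1, t2, hne, heq⟩ := Fintype.exists_ne_map_eq_of_card_lt f
    (by simp [d, Fintype.card_fun])
  rcases (Fin.val_ne_of_ne hne).lt_or_gt with h | h
  · exact main t1 t2 h heq
  · exact main t2 t1 h heq.symm

lemma rat_den_dvd_int (q : ℚ) (D : ℕ) (h : q.den ∣ D) : ∃ p : ℤ, (D : ℚ) * q = p := by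
  obtain ⟨c, hc⟩ := h
  refine ⟨c * q.num, ?_⟩
  have hden : (q.den : ℚ) ≠ 0 := by exact_mod_cast q.den_nz
  have hq : (q.den : ℚ) * q = q.num := by
    rw [mul_comm]
    nth_rewrite 1 [← Rat.num_div_den q]
    exact div_mul_cancel₀ _ hden
  push_cast [hc]
  rw [mul_comm (q.den:ℚ), mul_assoc, hq]

theorem stmt13' {n : ℕ} (hn : 2 ≤ n) (ω : Fin n → ℝ)
    (hres : ∃ k : Fin n → ℤ, k ≠ 0 ∧ ∃ m : ℤ, ∑ i, (k i : ℝ) * ω i = (m : ℝ)) :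
    ∃ C > (0 : ℝ), ∀ N : ℕ, ∃ T : ℕ, N ≤ T ∧ 1 ≤ T ∧
      distZ (fun j => (T : ℝ) * ω j) ≤ C * (T : ℝ) ^ (-(1 : ℝ) / ((n : ℝ) - 1)) := by
  classical
  haveI : Nonempty (Fin n) := ⟨⟨0, by omega⟩⟩
  obtain ⟨k, hk0, m, hm⟩ := hres
  obtain ⟨i, hki⟩ : ∃ i, k i ≠ 0 := by
    by_contra h; push_neg at h; exact hk0 (funext h)
  have hn1 : (1:ℝ) ≤ (n:ℝ) - 1 := by
    have : (2:ℝ) ≤ (n:ℝ) := by exact_mod_cast hn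
    linarith
  set e : ℝ := 1 / ((n:ℝ) - 1) with he_def
  have he_pos : 0 < e := div_pos one_pos (by linarith)
  have he1 : e ≤ 1 := by rw [he_def, div_le_one (by linarith)]; linarith
  have hneg : -(1:ℝ)/((n:ℝ)-1) = -e := by rw [he_def, neg_div]
  have hsum_split : (k i:ℝ) * ω i + ∑ j ∈ Finset.univ.erase i, (k j:ℝ) * ω j = (m:ℝ) :=
    (Finset.add_sum_erase Finset.univ (fun j => (k j:ℝ) * ω j) (mem_univ i)).trans hm
  by_cases hirr : ∃ j, j ≠ i ∧ Irrational (ω j)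
  · -- MAIN CASE
    obtain ⟨j0, hj0i, hj0irr⟩ := hirr
    have hcardι : Fintype.card {j : Fin n // ¬ (j = i)} = n - 1 := by
      rw [Fintype.card_subtype_compl, Fintype.card_subtype_eq, Fintype.card_fin]
    set K0 : ℤ := |k i| with hK0def
    have hK0 : 1 ≤ K0 := Int.one_le_abs hki
    have hK0R : (1:ℝ) ≤ (K0:ℝ) := by exact_mod_cast hK0
    set S : ℝ := ∑ j, |(k j : ℝ)| with hSdef
    have hK0S : (K0:ℝ) ≤ S := by
      rw [hSdef, hK0def]
      push_cast
      exact Finset.single_le_sum (f := fun j => |(k j:ℝ)|) (fun j _ => abs_nonneg _) (mem_univ i)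
    have hS0 : 0 < S := by linarith
    refine ⟨S * K0, mul_pos hS0 (by linarith), fun N => ?_⟩
    set N' := max N 1 with hN'
    set g : ℕ → ℝ := fun q => min (Int.fract (q * ω j0)) (1 - Int.fract (q * ω j0)) with hg
    have hgpos : ∀ q ∈ Finset.Icc 1 N', 0 < g q := by
      intro q hq
      simp only [Finset.mem_Icc] at hq
      have hirrq : Irrational ((q:ℝ) * ω j0) := hj0irr.natCast_mul (by omega)
      have h1 : Int.fract ((q:ℝ) * ω j0) ≠ 0 := by
        intro h
        have : (q:ℝ) * ω j0 = (⌊(q:ℝ)*ω j0⌋ : ℤ) := by unfold Int.fract at h; push_cast; linarith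
        exact hirrq.ne_int _ this
      have h2 := Int.fract_nonneg ((q:ℝ) * ω j0)
      have h3 := Int.fract_lt_one ((q:ℝ) * ω j0)
      exact lt_min (lt_of_le_of_ne h2 (Ne.symm h1)) (by linarith)
    have hIcc : (Finset.Icc 1 N').Nonempty := ⟨1, by simp [hN']⟩
    set ε : ℝ := (Finset.Icc 1 N').inf' hIcc g with hε
    have hεpos : 0 < ε := by
      rw [hε, Finset.lt_inf'_iff]; exact hgpos
    obtain ⟨Q0, hQ0⟩ := exists_nat_gt (1/ε)
    set Q := max Q0 1 with hQ
    have hQ1 : 1 ≤ Q := le_max_right _ _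
    have hQR : (0:ℝ) < Q := by
      have : (1:ℝ) ≤ (Q:ℝ) := by exact_mod_cast hQ1
      linarith
    have hQε : 1 / (Q:ℝ) < ε := by
      have hQ0' : (1/ε) < (Q:ℝ) := lt_of_lt_of_le hQ0 (by exact_mod_cast le_max_left Q0 1)
      have h1 : 1 < (Q:ℝ) * ε := (div_lt_iff₀ hεpos).mp hQ0'
      rw [div_lt_iff₀ hQR]; linarith
    obtain ⟨q, hq1, hqle, hp⟩ := dirichlet (fun j : {j : Fin n // ¬ (j = i)} => ω j.val) Q hQ1
    rw [hcardι] at hqle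
    choose p hpspec using hp
    have hqN : N' < q := by
      by_contra hle
      push_neg at hle
      have hqmem : q ∈ Finset.Icc 1 N' := Finset.mem_Icc.mpr ⟨hq1, hle⟩
      have h1 : ε ≤ g q := Finset.inf'_le g hqmem
      have h2 := nearest_int_bound ((q:ℝ) * ω j0) (p ⟨j0, hj0i⟩)
      have h3 : |(q:ℝ) * ω j0 - (p ⟨j0, hj0i⟩ : ℝ)| < 1/(Q:ℝ) := hpspec ⟨j0, hj0i⟩
      have h4 : g q ≤ |(q:ℝ) * ω j0 - (p ⟨j0, hj0i⟩ : ℝ)| := h2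
      linarith
    set ε' : ℤ := if 0 ≤ k i then 1 else -1 with hε'def
    have hε'k : ε' * k i = K0 := by
      rw [hε'def, hK0def]; rcases le_or_gt 0 (k i) with h|h
      · rw [if_pos h, abs_of_nonneg h]; ring
      · rw [if_neg (not_le.mpr h), abs_of_neg h]; ring
    have hε'abs : |(ε':ℝ)| = 1 := by rw [hε'def]; split <;> simp
    set T : ℕ := K0.toNat * q with hT
    have hTval : (T:ℝ) = (K0:ℝ) * q := by
      have hc : ((K0.toNat:ℕ):ℝ) = (K0:ℝ) := by
        exact_mod_cast Int.toNat_of_nonneg (by omega : (0:ℤ) ≤ K0)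
      rw [hT]; push_cast; rw [hc]
    have hT1 : 1 ≤ T := by
      have h1 : 1 ≤ K0.toNat := by omega
      have := Nat.mul_le_mul h1 hq1
      omega
    have hTN : N ≤ T := by
      have hqT : q ≤ T := by
        rw [hT]; exact Nat.le_mul_of_pos_left q (by omega)
      have hNN' : N ≤ N' := le_max_left _ _
      omega
    set pe : Fin n → ℤ := fun j => if h : ¬ (j = i) then p ⟨j, h⟩ else 0 with hpe
    have hpebound : ∀ j ∈ Finset.univ.erase i, |(q:ℝ) * ω j - (pe j : ℝ)| < 1/(Q:ℝ) := by
      intro j hj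
      have hjne : ¬ (j = i) := Finset.ne_of_mem_erase hj
      rw [hpe]; simp only [dif_pos hjne]
      exact hpspec ⟨j, hjne⟩
    set P : Fin n → ℤ := fun j =>
      if j = i then ε' * (q * m - ∑ j' ∈ Finset.univ.erase i, k j' * pe j') else K0 * pe j with hP
    have hbound : ∀ j, |(T:ℝ) * ω j - (P j : ℝ)| ≤ S / Q := by
      intro j
      by_cases hj : j = i
      · subst hj
        have hexpand : ∑ j' ∈ Finset.univ.erase j, (k j':ℝ) * ((q:ℝ) * ω j' - (pe j':ℝ))
            = (q:ℝ) * (∑ j' ∈ Finset.univ.erase j, (k j':ℝ) * ω j')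
              - ∑ j' ∈ Finset.univ.erase j, (k j':ℝ) * (pe j':ℝ) := by
          rw [Finset.mul_sum, ← Finset.sum_sub_distrib]
          exact Finset.sum_congr rfl (fun _ _ => by ring)
        have hK0cast : (ε':ℝ) * (k j:ℝ) = (K0:ℝ) := by exact_mod_cast hε'k
        have heq : (T:ℝ) * ω j - (P j : ℝ)
            = (ε':ℝ) * -(∑ j' ∈ Finset.univ.erase j, (k j':ℝ) * ((q:ℝ) * ω j' - (pe j':ℝ))) := by
          rw [hP]
          simp only [if_pos rfl]
          push_cast
          rw [hexpand, hTval, ← hK0cast]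
          linear_combination ((ε':ℝ) * (q:ℝ)) * hsum_split
        rw [heq, abs_mul, hε'abs, one_mul, abs_neg]
        calc |∑ j' ∈ Finset.univ.erase j, (k j':ℝ) * ((q:ℝ) * ω j' - (pe j':ℝ))|
            ≤ ∑ j' ∈ Finset.univ.erase j, |(k j':ℝ) * ((q:ℝ) * ω j' - (pe j':ℝ))| :=
              Finset.abs_sum_le_sum_abs _ _
          _ ≤ ∑ j' ∈ Finset.univ.erase j, |(k j':ℝ)| * (1/(Q:ℝ)) := by
              apply Finset.sum_le_sum
              intro j' hj'
              rw [abs_mul]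
              exact mul_le_mul_of_nonneg_left (hpebound j' hj').le (abs_nonneg _)
          _ ≤ ∑ j' ∈ Finset.univ, |(k j':ℝ)| * (1/(Q:ℝ)) :=
              Finset.sum_le_sum_of_subset_of_nonneg (Finset.erase_subset _ _)
                (fun _ _ _ => by positivity)
          _ = S / Q := by rw [← Finset.sum_mul, ← hSdef, mul_one_div]
      · have hpej : (P j : ℝ) = (K0:ℝ) * (pe j:ℝ) := by
          rw [hP]; simp only [if_neg hj]; push_cast; ring
        rw [hTval, hpej]
        have hre : (K0:ℝ) * q * ω j - (K0:ℝ) * (pe j:ℝ) = (K0:ℝ) * ((q:ℝ) * ω j - (pe j:ℝ)) := by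
          ring
        rw [hre, abs_mul, abs_of_nonneg (by linarith : (0:ℝ) ≤ (K0:ℝ))]
        calc (K0:ℝ) * |(q:ℝ) * ω j - (pe j:ℝ)|
            ≤ (K0:ℝ) * (1/(Q:ℝ)) :=
              mul_le_mul_of_nonneg_left
                (hpebound j (Finset.mem_erase.mpr ⟨hj, mem_univ j⟩)).le (by linarith)
          _ ≤ S * (1/(Q:ℝ)) := mul_le_mul_of_nonneg_right hK0S (by positivity)
          _ = S / Q := mul_one_div _ _
    have hdist : distZ (fun j => (T:ℝ) * ω j) ≤ S / Q :=
      (distZ_le _ P).trans (supNorm_le hbound)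
    refine ⟨T, hTN, hT1, ?_⟩
    have hTpos : (0:ℝ) < T := by
      have : (1:ℝ) ≤ (T:ℝ) := by exact_mod_cast hT1
      linarith
    have hTle : (T:ℝ) ≤ (K0:ℝ) * (Q:ℝ)^((n-1:ℕ)) := by
      rw [hTval]
      have h1 : (q:ℝ) ≤ (Q:ℝ)^(n-1:ℕ) := by exact_mod_cast hqle
      nlinarith
    have hrpow : (T:ℝ) ^ e ≤ (K0:ℝ) * Q := by
      have h1 : (T:ℝ)^e ≤ ((K0:ℝ) * (Q:ℝ)^(n-1:ℕ))^e :=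
        Real.rpow_le_rpow hTpos.le hTle he_pos.le
      have h2 : ((K0:ℝ) * (Q:ℝ)^(n-1:ℕ))^e = (K0:ℝ)^e * ((Q:ℝ)^(n-1:ℕ))^e :=
        Real.mul_rpow (by linarith) (by positivity)
      have h3 : ((Q:ℝ)^(n-1:ℕ))^e = (Q:ℝ) := by
        rw [← Real.rpow_natCast (Q:ℝ) (n-1), ← Real.rpow_mul hQR.le]
        have hne : ((n-1:ℕ):ℝ) * e = 1 := by
          rw [Nat.cast_sub (by omega), he_def]
          push_cast
          field_simp
        rw [hne, Real.rpow_one]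
      have h4 : (K0:ℝ)^e ≤ (K0:ℝ) := by
        have := Real.rpow_le_rpow_of_exponent_le hK0R he1
        rwa [Real.rpow_one] at this
      calc (T:ℝ)^e ≤ (K0:ℝ)^e * (Q:ℝ) := by rw [← h3, ← h2]; exact h1
        _ ≤ (K0:ℝ) * Q := mul_le_mul_of_nonneg_right h4 hQR.le
    rw [hneg, Real.rpow_neg hTpos.le]
    have hTe : 0 < (T:ℝ)^e := Real.rpow_pos_of_pos hTpos _
    have hinv : ((K0:ℝ) * Q)⁻¹ ≤ ((T:ℝ)^e)⁻¹ := by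
      apply inv_anti₀ hTe hrpow
    calc distZ (fun j => (T:ℝ) * ω j) ≤ S / Q := hdist
      _ = S * K0 * ((K0:ℝ)*Q)⁻¹ := by
          rw [mul_inv]
          have hK0ne : (K0:ℝ) ≠ 0 := by linarith
          field_simp
      _ ≤ S * K0 * ((T:ℝ)^e)⁻¹ := mul_le_mul_of_nonneg_left hinv
            (mul_nonneg hS0.le (by linarith : (0:ℝ) ≤ (K0:ℝ)))
  · -- RATIONAL CASE
    push_neg at hirr
    have hratj : ∀ j, j ≠ i → ∃ qr : ℚ, (qr:ℝ) = ω j := by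
      intro j hj
      have h := hirr j hj
      rw [Irrational] at h
      exact not_not.mp h
    set ρ0 : Fin n → ℚ := fun j => if h : j ≠ i then Classical.choose (hratj j h) else 0 with hρ0
    have hρ0spec : ∀ j (h : j ≠ i), (ρ0 j : ℝ) = ω j := by
      intro j h
      rw [hρ0]; simp only [dif_pos h]
      exact Classical.choose_spec (hratj j h)
    have hkiQ : ((k i : ℚ)) ≠ 0 := by exact_mod_cast hki
    have hkiR : ((k i : ℝ)) ≠ 0 := by exact_mod_cast hki
    set qi : ℚ := ((m:ℚ) - ∑ j ∈ Finset.univ.erase i, (k j:ℚ) * ρ0 j) / (k i) with hqi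
    have hqiω : (qi:ℝ) = ω i := by
      rw [hqi]
      push_cast
      rw [div_eq_iff hkiR]
      have hsc : ∑ j ∈ Finset.univ.erase i, (k j:ℝ) * (ρ0 j : ℝ)
          = ∑ j ∈ Finset.univ.erase i, (k j:ℝ) * ω j :=
        Finset.sum_congr rfl (fun j hj => by rw [hρ0spec j (Finset.ne_of_mem_erase hj)])
      rw [hsc]
      linarith [hsum_split]
    set ρ : Fin n → ℚ := fun j => if j = i then qi else ρ0 j with hρdef
    have hρ : ∀ j, (ρ j : ℝ) = ω j := by
      intro j
      rw [hρdef]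
      by_cases h : j = i
      · subst h; simp only [if_pos rfl]; exact hqiω
      · simp only [if_neg h]; exact hρ0spec j h
    set D : ℕ := ∏ j, (ρ j).den with hD
    have hD1 : 1 ≤ D := Finset.one_le_prod' (fun j _ => (ρ j).pos)
    have hint : ∀ j, ∃ p : ℤ, (D:ℝ) * ω j = p := by
      intro j
      obtain ⟨p, hp⟩ := rat_den_dvd_int (ρ j) D (Finset.dvd_prod_of_mem _ (mem_univ j))
      refine ⟨p, ?_⟩
      rw [← hρ j]
      exact_mod_cast congrArg (fun x : ℚ => (x:ℝ)) hp
    refine ⟨1, one_pos, fun N => ?_⟩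
    refine ⟨D * max N 1, ?_, ?_, ?_⟩
    · calc N ≤ max N 1 := le_max_left _ _
        _ ≤ D * max N 1 := Nat.le_mul_of_pos_left _ (by omega)
    · have h1 : 1 ≤ max N 1 := le_max_right _ _
      have := Nat.mul_le_mul hD1 h1
      omega
    · have hz : distZ (fun j => ((D * max N 1 : ℕ):ℝ) * ω j) ≤ 0 := by
        apply distZ_le_zero
        intro j
        obtain ⟨p, hp⟩ := hint j
        refine ⟨(max N 1 : ℕ) * p, ?_⟩
        push_cast
        rw [mul_comm (D:ℝ), mul_assoc, hp]
      refine hz.trans ?_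
      have hge : (0:ℝ) ≤ ((D * max N 1 : ℕ):ℝ) ^ (-(1:ℝ)/((n:ℝ)-1)) :=
        Real.rpow_nonneg (by positivity) _
      linarith

/-- a resonant vector in `ℝⁿ`, `n ≥ 2`, satisfies
`‖Tω‖_ℤ ≤ C·T^{-1/(n-1)}` for infinitely many positive integers `T`. -/
theorem stmt13 {n : ℕ} (hn : 2 ≤ n) (ω : Fin n → ℝ) (hres : Resonant ω) :
    ∃ C > (0 : ℝ), ∀ N : ℕ, ∃ T : ℕ, N ≤ T ∧ 1 ≤ T ∧
      distZ (fun j => (T : ℝ) * ω j) ≤ C * (T : ℝ) ^ (-(1 : ℝ) / ((n : ℝ) - 1)) := by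
  exact stmt13' hn ω hres
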